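/- Let h : ℝ^d → ℝ be differentiable with L-Lipschitz gradient and bounded below by h*, and let {x^k, b_k} be AdaGrad-Norm iterates: b_{k+1}² = b_k² + ‖∇h(x^k)‖², x^{k+1} = x^k − (1/b_{k+1}) ∇h(x^k). Suppose k_1 is an index such that b_{k+1} ≥ L for all k ≥ k_1. Then for every K > k_1, b_K ≤ b_{k_1} + 2 (h(x^{k_1}) − h*). -/

import Mathlib

open InnerProductSpace

lemma descent_lemma {n : ℕ} (h : EuclideanSpace ℝ (Fin n) → ℝ)
    (hdiff : Differentiable ℝ h) (L : ℝ)
    (hLip : ∀ u v, ‖gradient h u - gradient h v‖ ≤ L * ‖u - v‖)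
    (x v : EuclideanSpace ℝ (Fin n)) :
    h (x + v) ≤ h x + inner ℝ (gradient h x) v + L / 2 * ‖v‖ ^ 2 := by
  have grad_inner : ∀ y w : EuclideanSpace ℝ (Fin n),
      (inner ℝ (gradient h y) w : ℝ) = fderiv ℝ h y w := by
    intro y w
    rw [gradient, toDual_symm_apply]
  set φ : ℝ → ℝ := fun t =>
    h (x + t • v) - t * inner ℝ (gradient h x) v - L * t ^ 2 / 2 * ‖v‖ ^ 2 with hφ
  have hderiv : ∀ t : ℝ, HasDerivAt φ
      ((inner ℝ (gradient h (x + t • v)) v : ℝ) - inner ℝ (gradient h x) v - L * t * ‖v‖ ^ 2) t := by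
    intro t
    have hc : HasDerivAt (fun t : ℝ => x + t • v) v t := by
      simpa using ((hasDerivAt_id t).smul_const v).const_add x
    have h1 : HasDerivAt (fun t : ℝ => h (x + t • v)) (fderiv ℝ h (x + t • v) v) t :=
      (hdiff (x + t • v)).hasFDerivAt.comp_hasDerivAt t hc
    rw [← grad_inner] at h1
    have h2 : HasDerivAt (fun t : ℝ => t * (inner ℝ (gradient h x) v : ℝ))
        (inner ℝ (gradient h x) v : ℝ) t := by
      simpa using (hasDerivAt_id t).mul_const (inner ℝ (gradient h x) v : ℝ)
    have h3 : HasDerivAt (fun t : ℝ => L * t ^ 2 / 2 * ‖v‖ ^ 2) (L * t * ‖v‖ ^ 2) t := by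
      have := ((hasDerivAt_pow 2 t).const_mul L).div_const 2
      have := this.mul_const (‖v‖ ^ 2)
      exact this.congr_deriv (by rw [show (2:ℕ) - 1 = 1 from rfl]; push_cast; ring)
    exact (h1.sub h2).sub h3
  have hanti : AntitoneOn φ (Set.Icc 0 1) := by
    apply antitoneOn_of_deriv_nonpos (convex_Icc 0 1)
    · exact (fun t _ => ((hderiv t).differentiableAt).continuousAt.continuousWithinAt)
    · intro t _
      exact ((hderiv t).differentiableAt).differentiableWithinAt
    · intro t ht
      rw [interior_Icc] at ht
      rw [(hderiv t).deriv]
      have hb1 : (inner ℝ (gradient h (x + t • v) - gradient h x) v : ℝ)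
          ≤ ‖gradient h (x + t • v) - gradient h x‖ * ‖v‖ := real_inner_le_norm _ _
      have hb2 : ‖gradient h (x + t • v) - gradient h x‖ ≤ L * (t * ‖v‖) := by
        have := hLip (x + t • v) x
        simpa [norm_smul, abs_of_pos ht.1, mul_assoc] using this
      rw [inner_sub_left] at hb1
      nlinarith [norm_nonneg v, mul_le_mul_of_nonneg_right hb2 (norm_nonneg v), ht.1.le]
  have h1 : φ 1 ≤ φ 0 :=
    hanti (Set.left_mem_Icc.2 zero_le_one) (Set.right_mem_Icc.2 zero_le_one) zero_le_one
  simp only [hφ, one_smul, zero_smul, add_zero, one_pow, zero_pow, one_mul, zero_mul,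
    mul_zero, zero_div, sub_zero, ne_eq, OfNat.ofNat_ne_zero, not_false_eq_true] at h1
  linarith


/-- upper bound on AdaGrad-Norm step sizes after the switch index.
For AdaGrad-Norm iterates of `h` with `L`-Lipschitz gradient bounded below by `h*`,
if `b_{k+1} ≥ L` for all `k ≥ k₁`, then for every `K > k₁`,
`b_K ≤ b_{k₁} + 2(h(x^{k₁}) − h*)`. -/
theorem adagrad_stepsize_upper_bound
    {n : ℕ} (h : EuclideanSpace ℝ (Fin n) → ℝ) (hdiff : Differentiable ℝ h)
    (L hstar : ℝ)
    (hLip : ∀ u v, ‖gradient h u - gradient h v‖ ≤ L * ‖u - v‖)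
    (hlow : ∀ x, hstar ≤ h x)
    (b₀ : ℝ) (hb₀ : 0 < b₀)
    (x : ℕ → EuclideanSpace ℝ (Fin n)) (b : ℕ → ℝ)
    (hb0 : b 0 = b₀)
    (hb : ∀ k : ℕ, b (k + 1) = Real.sqrt (b k ^ 2 + ‖gradient h (x k)‖ ^ 2))
    (hx : ∀ k : ℕ, x (k + 1) = x k - (1 / b (k + 1)) • gradient h (x k))
    (k₁ : ℕ) (hk₁ : ∀ k, k₁ ≤ k → L ≤ b (k + 1)) :
    ∀ K : ℕ, k₁ < K → b K ≤ b k₁ + 2 * (h (x k₁) - hstar) := by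
  -- positivity and monotonicity of b
  have hbpos : ∀ k, 0 < b k := by
    intro k
    induction k with
    | zero => rw [hb0]; exact hb₀
    | succ k ih =>
      rw [hb k]
      have : (0:ℝ) < b k ^ 2 + ‖gradient h (x k)‖ ^ 2 := by positivity
      exact Real.sqrt_pos.2 this
  have hbsq : ∀ k, b (k + 1) ^ 2 = b k ^ 2 + ‖gradient h (x k)‖ ^ 2 := by
    intro k
    rw [hb k, Real.sq_sqrt (by positivity)]
  have hbmono : ∀ k, b k ≤ b (k + 1) := by
    intro k
    have h1 : b k ^ 2 ≤ b (k + 1) ^ 2 := by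
      rw [hbsq k]; nlinarith [sq_nonneg ‖gradient h (x k)‖]
    nlinarith [hbpos k, hbpos (k+1)]
  -- one-step descent for k ≥ k₁
  have hstep : ∀ k, k₁ ≤ k →
      h (x (k + 1)) ≤ h (x k) - ‖gradient h (x k)‖ ^ 2 / (2 * b (k + 1)) := by
    intro k hk
    have hbp := hbpos (k + 1)
    have hLb := hk₁ k hk
    have hd := descent_lemma h hdiff L hLip (x k) (-((1 / b (k + 1)) • gradient h (x k)))
    rw [← sub_eq_add_neg, ← hx k] at hd
    have hinner : (inner ℝ (gradient h (x k)) (-((1 / b (k + 1)) • gradient h (x k))) : ℝ)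
        = -(1 / b (k + 1)) * ‖gradient h (x k)‖ ^ 2 := by
      rw [inner_neg_right, real_inner_smul_right, real_inner_self_eq_norm_sq]
      ring
    have hnorm : ‖-((1 / b (k + 1)) • gradient h (x k))‖ ^ 2
        = (1 / b (k + 1)) ^ 2 * ‖gradient h (x k)‖ ^ 2 := by
      rw [norm_neg, norm_smul]
      rw [Real.norm_eq_abs, abs_of_pos (by positivity)]
      ring
    rw [hinner, hnorm] at hd
    set g := ‖gradient h (x k)‖ ^ 2 with hg
    have hgnn : (0:ℝ) ≤ g := by positivity
    have hkey : L / 2 * ((1 / b (k + 1)) ^ 2 * g)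
        ≤ g / (2 * b (k + 1)) := by
      have h4 : L / 2 * ((1 / b (k + 1)) ^ 2 * g)
          ≤ b (k + 1) / 2 * ((1 / b (k + 1)) ^ 2 * g) := by
        apply mul_le_mul_of_nonneg_right (by linarith) (by positivity)
      have heq : b (k + 1) / 2 * ((1 / b (k + 1)) ^ 2 * g) = g / (2 * b (k + 1)) := by
        field_simp
      linarith
    have h5 : -(1 / b (k + 1)) * g = -(g / b (k + 1)) := by ring
    have h6 : g / b (k + 1) - g / (2 * b (k + 1)) = g / (2 * b (k + 1)) := by
      field_simp
      ring
    linarith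
  -- h decreasing after k₁
  have hmonoh : ∀ k, k₁ ≤ k → h (x (k + 1)) ≤ h (x k) := by
    intro k hk
    have hbp := hbpos (k + 1)
    have : (0:ℝ) ≤ ‖gradient h (x k)‖ ^ 2 / (2 * b (k + 1)) := by positivity
    linarith [hstep k hk]
  have hmonoh' : ∀ k, k₁ ≤ k → h (x k) ≤ h (x k₁) := by
    intro k hk
    induction k with
    | zero =>
      have hz : k₁ = 0 := Nat.le_zero.mp hk
      rw [hz]
    | succ k ih =>
      rcases Nat.eq_or_lt_of_le hk with h1 | h1
      · rw [← h1]
      · have hk' : k₁ ≤ k := Nat.lt_succ_iff.mp h1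
        exact le_trans (hmonoh k hk') (ih hk')
  -- main induction: b K ^ 2 ≤ b k₁ ^ 2 + 2 * b K * (h (x k₁) - h (x K))
  have hmain : ∀ K, k₁ < K → b K ^ 2 ≤ b k₁ ^ 2 + 2 * b K * (h (x k₁) - h (x K)) := by
    intro K hK
    induction K with
    | zero => omega
    | succ K ih =>
      have hk' : k₁ ≤ K := Nat.lt_succ_iff.mp hK
      have hs := hstep K hk'
      have hbp := hbpos (K + 1)
      have hg : ‖gradient h (x K)‖ ^ 2 ≤ 2 * b (K + 1) * (h (x K) - h (x (K + 1))) := by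
        have h2 : ‖gradient h (x K)‖ ^ 2 / (2 * b (K + 1)) ≤ h (x K) - h (x (K + 1)) := by
          linarith
        calc ‖gradient h (x K)‖ ^ 2
            = 2 * b (K + 1) * (‖gradient h (x K)‖ ^ 2 / (2 * b (K + 1))) := by
              field_simp
          _ ≤ 2 * b (K + 1) * (h (x K) - h (x (K + 1))) := by
              apply mul_le_mul_of_nonneg_left h2 (by positivity)
      rcases Nat.eq_or_lt_of_le hK with h1 | h1
      · -- base case K + 1 = k₁ + 1, i.e. k₁ = K
        have hK1 : k₁ = K := by omega
        subst hK1
        rw [hbsq k₁]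
        nlinarith
      · have hK' : k₁ < K := by omega
        have ihK := ih hK'
        have hΔ : 0 ≤ h (x k₁) - h (x K) := by linarith [hmonoh' K hk']
        have hbm : b K ≤ b (K + 1) := hbmono K
        rw [hbsq K]
        nlinarith
  intro K hK
  have hm := hmain K hK
  have hΔ : h (x K) ≥ hstar := hlow (x K)
  have hbK : 0 < b K := hbpos K
  have hbk1 : 0 < b k₁ := hbpos k₁
  have hble : b k₁ ≤ b K := by
    have : ∀ m, b k₁ ≤ b (k₁ + m) := by
      intro m
      induction m with
      | zero => simp
      | succ m ih => exact le_trans ih (by rw [← Nat.add_assoc]; exact hbmono (k₁ + m))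
    have := this (K - k₁)
    rwa [Nat.add_sub_cancel' (le_of_lt hK)] at this
  nlinarith
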